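/- In ℤ[[t]], the unique power series solution x with zero constant term of x² − a·x + t = 0 over ℚ (for a nonzero rational a) has coefficients x_k = C_{k-1} / a^{2k-1} for k ≥ 1. -/

import Mathlib

open PowerSeries Finset

theorem catalan_coeffs_of_quadratic_solution (a : ℚ) (ha : a ≠ 0)
    (x : PowerSeries ℚ) (hx0 : PowerSeries.constantCoeff x = 0)
    (hx : x ^ 2 - PowerSeries.C a * x + PowerSeries.X = 0) :
    ∀ k : ℕ, 1 ≤ k → PowerSeries.coeff k x = (catalan (k - 1) : ℚ) / a ^ (2 * k - 1) := by
  intro k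
  induction k using Nat.strong_induction_on with
  | _ k ih =>
    intro hk
    obtain ⟨n, rfl⟩ : ∃ n, k = n + 1 := ⟨k - 1, (Nat.succ_pred_eq_of_pos hk).symm⟩
    have heq := congrArg (PowerSeries.coeff (n + 1)) hx
    rw [map_zero, map_add, map_sub, sq, PowerSeries.coeff_mul, PowerSeries.coeff_C_mul,
      PowerSeries.coeff_X,
      Finset.Nat.sum_antidiagonal_eq_sum_range_succ_mk] at heq
    rw [Finset.sum_range_succ, Finset.sum_range_succ'] at heq
    have h0 : PowerSeries.coeff 0 x = 0 := by
      rwa [PowerSeries.coeff_zero_eq_constantCoeff]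
    simp only [Nat.sub_self, h0, mul_zero, zero_mul, add_zero, zero_add] at heq
    have hsum : ∑ i ∈ Finset.range n,
        PowerSeries.coeff (i + 1) x * PowerSeries.coeff (n + 1 - (i + 1)) x =
        ∑ i ∈ Finset.range n, (catalan i : ℚ) * (catalan (n - 1 - i) : ℚ) / a ^ (2 * n) := by
      refine Finset.sum_congr rfl fun i hi => ?_
      rw [Finset.mem_range] at hi
      rw [ih (i + 1) (by omega) (by omega), ih (n + 1 - (i + 1)) (by omega) (by omega),
        div_mul_div_comm, ← pow_add,
        show i + 1 - 1 = i by omega, show n + 1 - (i + 1) - 1 = n - 1 - i by omega,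
        show 2 * (i + 1) - 1 + (2 * (n + 1 - (i + 1)) - 1) = 2 * n by omega]
    rw [hsum] at heq
    rcases Nat.eq_zero_or_pos n with rfl | hn
    · simp only [Finset.range_zero, Finset.sum_empty, zero_sub, if_true] at heq
      show PowerSeries.coeff 1 x = (catalan (1 - 1) : ℚ) / a ^ (2 * 1 - 1)
      norm_num
      field_simp
      linarith
    · obtain ⟨m, rfl⟩ : ∃ m, n = m + 1 := ⟨n - 1, by omega⟩
      rw [← Finset.sum_div] at heq
      have hcat : ∑ i ∈ Finset.range (m + 1), (catalan i : ℚ) * (catalan (m + 1 - 1 - i) : ℚ)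
          = (catalan (m + 1) : ℚ) := by
        rw [catalan_succ]
        push_cast
        rw [← Fin.sum_univ_eq_sum_range]
      rw [hcat] at heq
      rw [if_neg (by omega : ¬ m + 1 + 1 = 1), add_zero] at heq
      have h3 : PowerSeries.coeff (m + 1 + 1) x
          = (catalan (m + 1) : ℚ) / a ^ (2 * (m + 1)) / a := by
        rw [eq_div_iff ha]
        linarith
      rw [h3, div_div, ← pow_succ,
        show m + 1 + 1 - 1 = m + 1 by omega,
        show 2 * (m + 1) + 1 = 2 * (m + 1 + 1) - 1 by omega]
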